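/- Exact snapshot reconstruction by the method-of-snapshots expansion: under the stated assumptions, if additionally r = n, so that e_1, …, e_n form a full orthonormal eigenbasis of ℝ^n for C with all eigenvalues λ_1, …, λ_n > 0, then every snapshot is exactly reconstructed: u_j = Σ_{k=1}^n √(n λ_k)·(e_k)_j·g_k = Σ_{k=1}^n ⟨u_j, g_k⟩_H·g_k for every 1 ≤ j ≤ n. -/

import Mathlib

open scoped RealInnerProductSpace

/-- Exact snapshot reconstruction by the method-of-snapshots expansion when a
full orthonormal eigenbasis (r = n) with positive eigenvalues is available. -/
theorem snapshot_exact_reconstruction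
    {H : Type*} [NormedAddCommGroup H] [InnerProductSpace ℝ H]
    {n : ℕ}
    (u : Fin n → H)
    (C : Matrix (Fin n) (Fin n) ℝ)
    (hC : ∀ j m : Fin n, C j m = (1 / (n : ℝ)) * ⟪u j, u m⟫)
    (lam : Fin n → ℝ) (e : Fin n → Fin n → ℝ)
    (hlam : ∀ k, 0 < lam k)
    (heig : ∀ k, C.mulVec (e k) = lam k • e k)
    (horth : ∀ k l : Fin n, ∑ j, e k j * e l j = if k = l then (1 : ℝ) else 0)
    (g : Fin n → H)
    (hg : ∀ k, g k = (1 / Real.sqrt (lam k * n)) • ∑ j, e k j • u j) :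
    ∀ j : Fin n,
      u j = ∑ k, (Real.sqrt ((n : ℝ) * lam k) * e k j) • g k ∧
      u j = ∑ k, ⟪u j, g k⟫ • g k := by
  intro j
  have hn : 0 < (n : ℝ) := by exact_mod_cast Fin.pos j
  -- columns orthonormality from rows
  have hcol : ∀ p m : Fin n, ∑ k, e k p * e k m = if p = m then (1 : ℝ) else 0 := by
    set E : Matrix (Fin n) (Fin n) ℝ := Matrix.of (fun k p => e k p) with hE
    have h1 : E * E.transpose = 1 := by
      ext k l
      simpa [Matrix.mul_apply, Matrix.one_apply, hE] using horth k l
    have h2 : E.transpose * E = 1 := mul_eq_one_comm.mp h1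
    intro p m
    have := congrFun (congrFun h2 p) m
    simpa [Matrix.mul_apply, Matrix.one_apply, hE] using this
  -- key scalar facts
  have hsq : ∀ k, Real.sqrt ((n : ℝ) * lam k) * (1 / Real.sqrt (lam k * n)) = 1 := by
    intro k
    have hne : Real.sqrt (lam k * n) ≠ 0 := by
      have hpos : 0 < lam k * n := mul_pos (hlam k) hn
      positivity
    rw [mul_comm (n : ℝ) (lam k), mul_one_div, div_self hne]
  -- first reconstruction
  have hfirst : u j = ∑ k, (Real.sqrt ((n : ℝ) * lam k) * e k j) • g k := by
    have : ∀ k, (Real.sqrt ((n : ℝ) * lam k) * e k j) • g k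
        = ∑ m, (e k j * e k m) • u m := by
      intro k
      rw [hg k, smul_smul, Finset.smul_sum]
      congr 1
      ext m
      rw [smul_smul]
      congr 1
      calc Real.sqrt ((n:ℝ) * lam k) * e k j * (1 / Real.sqrt (lam k * n)) * e k m
          = (Real.sqrt ((n:ℝ) * lam k) * (1 / Real.sqrt (lam k * n))) * (e k j * e k m) := by
            ring
        _ = e k j * e k m := by rw [hsq k]; ring
    rw [Finset.sum_congr rfl (fun k _ => this k), Finset.sum_comm]
    have : ∀ m : Fin n, ∑ k, (e k j * e k m) • u m
        = (if j = m then (1:ℝ) else 0) • u m := by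
      intro m
      rw [← Finset.sum_smul, hcol j m]
    rw [Finset.sum_congr rfl (fun m _ => this m)]
    simp
  refine ⟨hfirst, ?_⟩
  -- inner products coincide with the coefficients
  have hinner : ∀ k, ⟪u j, g k⟫ = Real.sqrt ((n : ℝ) * lam k) * e k j := by
    intro k
    rw [hg k, real_inner_smul_right, inner_sum]
    have h1 : ∀ m, ⟪u j, e k m • u m⟫ = e k m * ((n : ℝ) * C j m) := by
      intro m
      rw [real_inner_smul_right, hC j m]
      field_simp
    rw [Finset.sum_congr rfl (fun m _ => h1 m)]
    have h2 : ∑ m, e k m * ((n : ℝ) * C j m) = (n : ℝ) * (C.mulVec (e k) j) := by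
      rw [Matrix.mulVec, dotProduct, Finset.mul_sum]
      congr 1; ext m; ring
    rw [h2, heig k]
    have hpos : 0 < lam k * n := mul_pos (hlam k) hn
    have hs : Real.sqrt (lam k * n) * Real.sqrt (lam k * n) = lam k * n :=
      Real.mul_self_sqrt hpos.le
    have hne : Real.sqrt (lam k * n) ≠ 0 := by positivity
    have hkey : Real.sqrt ((n : ℝ) * lam k) = Real.sqrt (lam k * n) := by
      rw [mul_comm]
    rw [hkey]
    simp only [Pi.smul_apply, smul_eq_mul]
    rw [div_mul_eq_mul_div, one_mul, div_eq_iff hne]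
    linear_combination (-(e k j)) * hs
  rw [Finset.sum_congr rfl (fun k _ => by rw [hinner k])]
  exact hfirst
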